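/- Let H be a real inner product space, F : ℝⁿ → H differentiable, y, r ∈ H, and suppose ⟨DF(θ)[v], r⟩ = 0 for all θ, v. If θ̂ is a critical point of θ ↦ ‖y − F(θ) − r‖², then θ̂ is a critical point of θ ↦ ‖y − F(θ)‖². -/
import Mathlib

open RealInnerProductSpace

theorem stmt_9 {n : ℕ} {H : Type*} [NormedAddCommGroup H] [InnerProductSpace ℝ H]
    (F : EuclideanSpace ℝ (Fin n) → H) (hF : Differentiable ℝ F) (y r : H)
    (hinc : ∀ θ v, ⟪fderiv ℝ F θ v, r⟫ = 0)
    (θhat : EuclideanSpace ℝ (Fin n))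
    (hcrit : fderiv ℝ (fun θ => ‖y - F θ - r‖ ^ 2) θhat = 0) :
    fderiv ℝ (fun θ => ‖y - F θ‖ ^ 2) θhat = 0 := by
  have hG : HasFDerivAt (fun θ => y - F θ) (-(fderiv ℝ F θhat)) θhat :=
    (hF θhat).hasFDerivAt.const_sub y
  have hG2 : HasFDerivAt (fun θ => y - F θ - r) (-(fderiv ℝ F θhat)) θhat :=
    hG.sub_const r
  have e1 : (fun θ => ‖y - F θ‖ ^ 2) = fun θ => ⟪y - F θ, y - F θ⟫ :=
    funext fun θ => (real_inner_self_eq_norm_sq _).symm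
  have e2 : (fun θ => ‖y - F θ - r‖ ^ 2) = fun θ => ⟪y - F θ - r, y - F θ - r⟫ :=
    funext fun θ => (real_inner_self_eq_norm_sq _).symm
  rw [e1]
  rw [e2] at hcrit
  ext v
  have hz := congrFun (congrArg DFunLike.coe hcrit) v
  rw [fderiv_inner_apply ℝ hG2.differentiableAt hG2.differentiableAt v] at hz
  rw [fderiv_inner_apply ℝ hG.differentiableAt hG.differentiableAt v]
  rw [hG.fderiv] at *
  rw [hG2.fderiv] at hz
  have h2 : ∀ w, ⟪r, fderiv ℝ F θhat w⟫ = 0 := fun w => by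
    rw [real_inner_comm]; exact hinc θhat w
  simp only [h2, ContinuousLinearMap.neg_apply, inner_neg_neg, inner_neg_left, inner_neg_right,
    inner_sub_left, inner_sub_right, hinc, sub_zero, ContinuousLinearMap.zero_apply] at hz ⊢
  linarith [hz]
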